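/- Let (x_k)_{k∈ℤ} be a strictly increasing sequence of real numbers and let r = (r_k)_{k∈ℤ} be a summable family of nonnegative reals with ∑_{k∈ℤ} r_k = 1, regarded as a probability measure putting mass r_k at x_k. Then ∑_{k∈ℤ} (x_{k+1} − x_k) · √( (∑_{j≤k} r_j) · (∑_{j>k} r_j) ) ≤ ∑_{k∈ℤ} |x_k − x_0| · √(r_k), where both sides are sums of nonnegative terms and may equal +∞. In particular, if the summability condition ∑_{k∈ℤ} |x_k − x_0| √(r_k) < ∞ holds, then the del Barrio–Giné–Matrán condition ∫_ℝ √(F(t)(1−F(t))) dt < ∞ holds for the cumulative distribution function F of this measure, since the integral equals the left-hand sum. -/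

import Mathlib

open ENNReal

private lemma telescope_aux (x : ℤ → ℝ) {m n : ℤ} (h : m ≤ n) :
    ∑ k ∈ Finset.Ico m n, (x (k + 1) - x k) = x n - x m := by
  refine Int.le_induction (motive := fun n _ => ∑ k ∈ Finset.Ico m n, (x (k + 1) - x k) = x n - x m) ?_ ?_ n h
  · simp
  · intro n hmn ih
    have hins : Finset.Ico m (n + 1) = insert n (Finset.Ico m n) := by
      ext i; simp; omega
    rw [hins, Finset.sum_insert (by simp), ih]; ring

private lemma sq_bound_aux (r : ℤ → ℝ) (hr0 : ∀ k, 0 ≤ r k) (hrs : Summable r)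
    (P : ℤ → Prop) [DecidablePred P] :
    ENNReal.ofReal (∑' j, if P j then r j else 0) ≤
      (∑' j, if P j then ENNReal.ofReal (Real.sqrt (r j)) else 0) ^ 2 := by
  set u : ℤ → ℝ≥0∞ := fun j => if P j then ENNReal.ofReal (Real.sqrt (r j)) else 0 with hu
  have hsum : Summable (fun j => if P j then r j else 0) :=
    Summable.of_nonneg_of_le (fun j => by by_cases h : P j <;> simp [h, hr0 j])
      (fun j => by by_cases h : P j <;> simp [h, hr0 j]) hrs
  rw [ENNReal.ofReal_tsum_of_nonneg (fun j => by by_cases h : P j <;> simp [h, hr0 j]) hsum]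
  have heq : ∀ j, ENNReal.ofReal (if P j then r j else 0) = u j * u j := by
    intro j
    by_cases h : P j
    · simp only [hu, if_pos h]
      rw [← ENNReal.ofReal_mul (Real.sqrt_nonneg _), Real.mul_self_sqrt (hr0 j)]
    · simp [hu, h]
  calc ∑' j, ENNReal.ofReal (if P j then r j else 0)
      = ∑' j, u j * u j := tsum_congr heq
    _ ≤ ∑' j, u j * (∑' i, u i) :=
        ENNReal.tsum_le_tsum (fun j => mul_le_mul_right (ENNReal.le_tsum j) _)
    _ = (∑' j, u j) * (∑' i, u i) := ENNReal.tsum_mul_right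
    _ = (∑' j, u j) ^ 2 := (sq _).symm

theorem statement11
    (x : ℤ → ℝ) (hx : StrictMono x)
    (r : ℤ → ℝ) (hr0 : ∀ k, 0 ≤ r k) (hr1 : HasSum r 1) :
    ∑' k : ℤ, ENNReal.ofReal ((x (k + 1) - x k) *
        Real.sqrt ((∑' j : ℤ, if j ≤ k then r j else 0) *
          ∑' j : ℤ, if k < j then r j else 0)) ≤
      ∑' k : ℤ, ENNReal.ofReal (|x k - x 0| * Real.sqrt (r k)) := by
  classical
  have hrs : Summable r := hr1.summable
  set S : ℤ → ℝ≥0∞ := fun j => ENNReal.ofReal (Real.sqrt (r j)) with hS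
  set A : ℤ → ℝ≥0∞ := fun k => ENNReal.ofReal (x (k + 1) - x k) with hA
  set c : ℤ → ℤ → ℝ≥0∞ :=
    fun k j => if (0 ≤ k ∧ k < j) ∨ (k < 0 ∧ j ≤ k) then A k * S j else 0 with hc
  -- summability of indicator functions
  have hsum_ind : ∀ (P : ℤ → Prop) [DecidablePred P],
      Summable (fun j => if P j then r j else 0) := fun P _ =>
    Summable.of_nonneg_of_le (fun j => by by_cases h : P j <;> simp [h, hr0 j])
      (fun j => by by_cases h : P j <;> simp [h, hr0 j]) hrs
  have hle1 : ∀ (P : ℤ → Prop) [DecidablePred P],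
      (∑' j, if P j then r j else 0) ≤ 1 := by
    intro P _
    rw [← hr1.tsum_eq]
    exact Summable.tsum_le_tsum (fun j => by by_cases h : P j <;> simp [h, hr0 j]) (hsum_ind P) hrs
  have hnn : ∀ (P : ℤ → Prop) [DecidablePred P],
      0 ≤ (∑' j, if P j then r j else 0) := fun P _ =>
    tsum_nonneg (fun j => by by_cases h : P j <;> simp [h, hr0 j])
  -- square-compare helper in ℝ≥0∞
  have sqle : ∀ a b : ℝ≥0∞, a ^ 2 ≤ b ^ 2 → a ≤ b := by
    intro a b h
    by_contra hab
    push_neg at hab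
    exact absurd h (not_le.2 (ENNReal.pow_lt_pow_left two_ne_zero hab))
  have step1 : ∀ k : ℤ, ENNReal.ofReal ((x (k + 1) - x k) *
        Real.sqrt ((∑' j : ℤ, if j ≤ k then r j else 0) *
          ∑' j : ℤ, if k < j then r j else 0)) ≤ ∑' j, c k j := by
    intro k
    set F := ∑' j : ℤ, if j ≤ k then r j else 0 with hF
    set G := ∑' j : ℤ, if k < j then r j else 0 with hG
    have hF0 : 0 ≤ F := hnn _
    have hG0 : 0 ≤ G := hnn _
    have hF1 : F ≤ 1 := hle1 _
    have hG1 : G ≤ 1 := hle1 _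
    have hxk : 0 ≤ x (k + 1) - x k := le_of_lt (sub_pos.2 (hx (lt_add_one k)))
    rw [ENNReal.ofReal_mul hxk]
    rcases le_or_gt 0 k with hk | hk
    · -- use G
      have h1 : ENNReal.ofReal (Real.sqrt (F * G)) ≤
          ∑' j, if k < j then S j else 0 := by
        apply sqle
        rw [← ENNReal.ofReal_pow (Real.sqrt_nonneg _), Real.sq_sqrt (mul_nonneg hF0 hG0)]
        refine le_trans (ENNReal.ofReal_le_ofReal ?_) (sq_bound_aux r hr0 hrs (fun j => k < j))
        exact mul_le_of_le_one_left hG0 hF1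
      calc A k * ENNReal.ofReal (Real.sqrt (F * G))
          ≤ A k * ∑' j, if k < j then S j else 0 := mul_le_mul_right h1 _
        _ = ∑' j, A k * (if k < j then S j else 0) := (ENNReal.tsum_mul_left).symm
        _ = ∑' j, c k j := by
            refine tsum_congr fun j => ?_
            have hcond : ((0 ≤ k ∧ k < j) ∨ (k < 0 ∧ j ≤ k)) ↔ k < j := by omega
            simp only [hc, mul_ite, mul_zero]
            rw [if_congr hcond rfl rfl]
    · -- use F
      have h1 : ENNReal.ofReal (Real.sqrt (F * G)) ≤
          ∑' j, if j ≤ k then S j else 0 := by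
        apply sqle
        rw [← ENNReal.ofReal_pow (Real.sqrt_nonneg _), Real.sq_sqrt (mul_nonneg hF0 hG0)]
        refine le_trans (ENNReal.ofReal_le_ofReal ?_) (sq_bound_aux r hr0 hrs (fun j => j ≤ k))
        exact mul_le_of_le_one_right hF0 hG1
      calc A k * ENNReal.ofReal (Real.sqrt (F * G))
          ≤ A k * ∑' j, if j ≤ k then S j else 0 := mul_le_mul_right h1 _
        _ = ∑' j, A k * (if j ≤ k then S j else 0) := (ENNReal.tsum_mul_left).symm
        _ = ∑' j, c k j := by
            refine tsum_congr fun j => ?_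
            have hcond : ((0 ≤ k ∧ k < j) ∨ (k < 0 ∧ j ≤ k)) ↔ j ≤ k := by omega
            simp only [hc, mul_ite, mul_zero]
            rw [if_congr hcond rfl rfl]
  have step2 : ∀ j : ℤ, (∑' k, c k j) ≤ ENNReal.ofReal (|x j - x 0| * Real.sqrt (r j)) := by
    intro j
    set m := min j 0 with hm
    set n := max j 0 with hn
    have hmn : m ≤ n := min_le_max
    have hmem : ∀ k : ℤ, ((0 ≤ k ∧ k < j) ∨ (k < 0 ∧ j ≤ k)) ↔ (m ≤ k ∧ k < n) := by
      intro k; omega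
    have hsum : (∑' k, c k j) = ∑ k ∈ Finset.Ico m n, A k * S j := by
      rw [tsum_eq_sum (s := Finset.Ico m n) (fun k hk => ?_)]
      · refine Finset.sum_congr rfl fun k hk => ?_
        simp only [Finset.mem_Ico] at hk
        exact if_pos ((hmem k).2 hk)
      · simp only [Finset.mem_Ico] at hk
        exact if_neg (fun h => hk ((hmem k).1 h))
    have htel : (∑ k ∈ Finset.Ico m n, A k) = ENNReal.ofReal (x n - x m) := by
      rw [← telescope_aux x hmn,
        ENNReal.ofReal_sum_of_nonneg (fun k _ => le_of_lt (sub_pos.2 (hx (lt_add_one k))))]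
    have habs : x n - x m = |x j - x 0| := by
      rcases le_or_gt 0 j with hj | hj
      · have : m = 0 ∧ n = j := by constructor <;> omega
        rw [this.1, this.2, abs_of_nonneg (sub_nonneg.2 (hx.monotone hj))]
      · have : m = j ∧ n = 0 := by constructor <;> omega
        rw [this.1, this.2, abs_of_nonpos (sub_nonpos.2 (hx.monotone hj.le))]
        ring
    rw [hsum, ← Finset.sum_mul, htel, habs,
      ENNReal.ofReal_mul (abs_nonneg _)]
  calc ∑' k : ℤ, ENNReal.ofReal ((x (k + 1) - x k) *
        Real.sqrt ((∑' j : ℤ, if j ≤ k then r j else 0) *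
          ∑' j : ℤ, if k < j then r j else 0))
      ≤ ∑' k, ∑' j, c k j := ENNReal.tsum_le_tsum step1
    _ = ∑' j, ∑' k, c k j := ENNReal.tsum_comm
    _ ≤ ∑' j : ℤ, ENNReal.ofReal (|x j - x 0| * Real.sqrt (r j)) :=
        ENNReal.tsum_le_tsum step2
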